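/- For any graph G, the list chromatic number (choosability) of G is at most the dynamic list chromatic number of the 2-subdivision of G. -/

import Mathlib

open Finset

open scoped Classical in
noncomputable def deg {V : Type*} [Fintype V] (G : SimpleGraph V) (v : V) : ℕ :=
  (Finset.univ.filter (fun u => G.Adj v u)).card

def IsProper {V : Type*} (G : SimpleGraph V) (c : V → ℕ) : Prop :=
  ∀ u v, G.Adj u v → c u ≠ c v

def IsDynamic {V : Type*} [Fintype V] (G : SimpleGraph V) (c : V → ℕ) : Prop :=
  IsProper G c ∧ ∀ v, 2 ≤ deg G v → ∃ a b, G.Adj v a ∧ G.Adj v b ∧ c a ≠ c b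

noncomputable def chrom {V : Type*} (G : SimpleGraph V) : ℕ :=
  sInf {n | ∃ c : V → ℕ, (∀ v, c v < n) ∧ IsProper G c}

noncomputable def dynChrom {V : Type*} [Fintype V] (G : SimpleGraph V) : ℕ :=
  sInf {n | ∃ c : V → ℕ, (∀ v, c v < n) ∧ IsDynamic G c}

def subdiv {V : Type*} (G : SimpleGraph V) : SimpleGraph (V ⊕ G.edgeSet) where
  Adj x y :=
    match x, y with
    | Sum.inl u, Sum.inr e => u ∈ (e : Sym2 V)
    | Sum.inr e, Sum.inl u => u ∈ (e : Sym2 V)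
    | _, _ => False
  symm := by constructor; rintro (u | e) (v | f) h <;> first | exact h | exact h.elim
  loopless := by constructor; rintro (u | e) h <;> exact h

noncomputable instance {V : Type*} [Fintype V] (G : SimpleGraph V) : Fintype G.edgeSet :=
  Fintype.ofFinite _

def Choosable {V : Type*} (G : SimpleGraph V) (ℓ : ℕ) : Prop :=
  ∀ L : V → Finset ℕ, (∀ v, (L v).card = ℓ) →
    ∃ c : V → ℕ, (∀ v, c v ∈ L v) ∧ IsProper G c

def DynChoosable {V : Type*} [Fintype V] (G : SimpleGraph V) (ℓ : ℕ) : Prop :=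
  ∀ L : V → Finset ℕ, (∀ v, (L v).card = ℓ) →
    ∃ c : V → ℕ, (∀ v, c v ∈ L v) ∧ IsDynamic G c

noncomputable def listChrom {V : Type*} (G : SimpleGraph V) : ℕ :=
  sInf {ℓ | Choosable G ℓ}

noncomputable def dynListChrom {V : Type*} [Fintype V] (G : SimpleGraph V) : ℕ :=
  sInf {ℓ | DynChoosable G ℓ}

open scoped Classical in
lemma dynChoosable_card {W : Type*} [Fintype W] (H : SimpleGraph W) :
    DynChoosable H (Fintype.card W) := by
  intro L hL
  have hall : ∀ s : Finset W, s.card ≤ (s.biUnion L).card := by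
    intro s
    rcases s.eq_empty_or_nonempty with rfl | ⟨v, hv⟩
    · simp
    · calc s.card ≤ Fintype.card W := s.card_le_univ.trans_eq Finset.card_univ
        _ = (L v).card := (hL v).symm
        _ ≤ (s.biUnion L).card :=
          Finset.card_le_card (Finset.subset_biUnion_of_mem L hv)
  obtain ⟨c, hinj, hmem⟩ := (Finset.all_card_le_biUnion_card_iff_exists_injective L).mp hall
  refine ⟨c, hmem, ?_, ?_⟩
  · intro u v huv hc
    exact H.ne_of_adj huv (hinj hc)
  · intro v hv
    rw [deg] at hv
    obtain ⟨a, ha, b, hb, hab⟩ := Finset.one_lt_card.mp hv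
    refine ⟨a, b, (Finset.mem_filter.mp ha).2, (Finset.mem_filter.mp hb).2, ?_⟩
    exact fun h => hab (hinj h)

lemma choosable_of_dynChoosable_subdiv {V : Type*} [Fintype V] [DecidableEq V]
    (G : SimpleGraph V) (ℓ : ℕ) (h : DynChoosable (subdiv G) ℓ) : Choosable G ℓ := by
  intro L hL
  obtain ⟨c, hcmem, _, hdyn⟩ :=
    h (fun x => Sum.elim L (fun _ => Finset.range ℓ) x)
      (by rintro (v | e) <;> simp [hL])
  refine ⟨fun v => c (Sum.inl v), fun v => hcmem (Sum.inl v), ?_⟩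
  intro u v huv hc
  have he : s(u, v) ∈ G.edgeSet := huv
  set e : G.edgeSet := ⟨s(u, v), he⟩ with hedef
  have hadj_u : (subdiv G).Adj (Sum.inr e) (Sum.inl u) := by
    show u ∈ (e : Sym2 V); simp [hedef]
  have hadj_v : (subdiv G).Adj (Sum.inr e) (Sum.inl v) := by
    show v ∈ (e : Sym2 V); simp [hedef]
  have hdeg : 2 ≤ deg (subdiv G) (Sum.inr e) := by
    classical
    rw [deg]
    apply Finset.one_lt_card.mpr
    refine ⟨Sum.inl u, by simpa using hadj_u, Sum.inl v, by simpa using hadj_v, ?_⟩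
    simp [G.ne_of_adj huv]
  obtain ⟨a, b, ha, hb, hab⟩ := hdyn (Sum.inr e) hdeg
  have hmem : ∀ x, (subdiv G).Adj (Sum.inr e) x → x = Sum.inl u ∨ x = Sum.inl v := by
    rintro (w | f) hx
    · have : w ∈ (e : Sym2 V) := hx
      rw [hedef] at this
      rcases Sym2.mem_iff.mp this with rfl | rfl
      · exact Or.inl rfl
      · exact Or.inr rfl
    · exact hx.elim
  simp only at hc
  rcases hmem a ha with rfl | rfl <;> rcases hmem b hb with rfl | rfl <;>
    first
      | exact hab rfl
      | exact hab hc
      | exact hab hc.symm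

theorem listChrom_le_dynListChrom_subdiv {V : Type*} [Fintype V] [DecidableEq V]
    (G : SimpleGraph V) : listChrom G ≤ dynListChrom (subdiv G) := by
  have hne : {ℓ | DynChoosable (subdiv G) ℓ}.Nonempty :=
    ⟨Fintype.card (V ⊕ G.edgeSet), dynChoosable_card (subdiv G)⟩
  have hmem : dynListChrom (subdiv G) ∈ {ℓ | DynChoosable (subdiv G) ℓ} :=
    Nat.sInf_mem hne
  exact Nat.sInf_le (choosable_of_dynChoosable_subdiv G _ hmem)
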